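/- Let G be a weighted undirected graph with n nodes, edge set E of cardinality m and edge weights a_{ij} > 0, let q ∈ ℝ^n be a balanced vector (q ⟂ 1_n), let γ ∈ [0,π), let {h_e}_{e∈E} be a family of continuously differentiable 2π-periodic odd functions, and let {H_e}_{e∈E} be a family of twice differentiable 2π-periodic even functions such that dH_e/dα (α) = h_e(α) for each edge e and each α ∈ (−γ,γ). Then for θ ∈ 𝕋^n the following are equivalent: (i) there exists f ∈ ℝ^m such that (f,θ) solves the flow network problem for (G,{h_e},q,γ); (ii) θ solves the elastic network problem for (G,{H_e},q,γ), i.e. q = ∇_θ H(θ) where H(θ) = Σ_{(i,j)∈E} a_{ij} H_e(θ_i − θ_j), and |θ_i − θ_j| ≤ γ for every edge (i,j). -/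

import Mathlib

open scoped BigOperators
open Real Matrix

noncomputable section

/-- Counterclockwise difference on the circle: the representative of `α - β` in `[-π, π)`. -/
def dcc (α β : Real.Angle) : ℝ := -((β - α).toReal)

/-- An oriented (multi)graph on node set `Fin n` with edge set `Fin m`;
each edge has a source and a target (sink) node. -/
structure OGraph (n m : ℕ) where
  src : Fin m → Fin n
  tgt : Fin m → Fin n
  noLoop : ∀ e, src e ≠ tgt e

namespace OGraph

variable {n m : ℕ}

/-- Incidence matrix `B`: entry `+1` at the sink (target) of an edge, `-1` at its source. -/
def inc (G : OGraph n m) : Matrix (Fin n) (Fin m) ℝ :=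
  Matrix.of fun k e => if k = G.tgt e then (1 : ℝ) else if k = G.src e then -1 else 0

/-- Two nodes are adjacent if some edge joins them. -/
def adjRel (G : OGraph n m) (i j : Fin n) : Prop :=
  ∃ e, (G.src e = i ∧ G.tgt e = j) ∨ (G.src e = j ∧ G.tgt e = i)

/-- The (undirected) graph is connected. -/
def Connected (G : OGraph n m) : Prop :=
  ∀ i j : Fin n, Relation.ReflTransGen G.adjRel i j

/-- The vector `(Bᵀ θ)` of counterclockwise differences along the oriented edges. -/
def edgeDiff (G : OGraph n m) (θ : Fin n → Real.Angle) : Fin m → ℝ :=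
  fun e => dcc (θ (G.tgt e)) (θ (G.src e))

/-- Membership in the punctured `n`-torus: all edge differences have geodesic length `< π`. -/
def Punctured (G : OGraph n m) (θ : Fin n → Real.Angle) : Prop :=
  ∀ e, |G.edgeDiff θ e| < π

/-- A cycle in the graph: a cyclically ordered sequence of `k + 3 ≥ 3` distinct nodes,
any two consecutive ones joined by an edge, traversed positively or negatively. -/
structure Cycle (G : OGraph n m) where
  k : ℕ
  vert : Fin (k + 3) → Fin n
  vertInj : Function.Injective vert
  edge : Fin (k + 3) → Fin m
  dir : Fin (k + 3) → Bool
  pos_compat : ∀ i, dir i = true → G.tgt (edge i) = vert i ∧ G.src (edge i) = vert (i + 1)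
  neg_compat : ∀ i, dir i = false → G.src (edge i) = vert i ∧ G.tgt (edge i) = vert (i + 1)

namespace Cycle

variable {G : OGraph n m}

/-- The number of nodes of the cycle. -/
def len (σ : G.Cycle) : ℕ := σ.k + 3

/-- Signed cycle vector `v_σ ∈ {-1,0,1}^m`. -/
def sgnVec (σ : G.Cycle) : Fin m → ℝ := fun e =>
  ∑ i : Fin (σ.k + 3), if σ.edge i = e then (if σ.dir i then (1 : ℝ) else -1) else 0

/-- Winding number of `θ` along the cycle `σ`. -/
def winding (σ : G.Cycle) (θ : Fin n → Real.Angle) : ℝ :=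
  (1 / (2 * π)) * ∑ i : Fin (σ.k + 3), dcc (θ (σ.vert i)) (θ (σ.vert (i + 1)))

end Cycle

/-- A family of cycles is a cycle basis if the signed cycle vectors form a basis
of the cycle space `Ker B`. -/
def IsCycleBasis (G : OGraph n m) (c : Fin (m + 1 - n) → G.Cycle) : Prop :=
  LinearIndependent ℝ (fun i => (c i).sgnVec) ∧
    Submodule.span ℝ (Set.range fun i => (c i).sgnVec) = LinearMap.ker G.inc.mulVecLin

/-- Cycle–edge matrix `C_Σ`, whose rows are the signed cycle vectors. -/
def cycMat (G : OGraph n m) (c : Fin (m + 1 - n) → G.Cycle) :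
    Matrix (Fin (m + 1 - n)) (Fin m) ℝ :=
  Matrix.of fun i e => (c i).sgnVec e

/-- Winding map along a family of cycles. -/
def windingMap (G : OGraph n m) (c : Fin (m + 1 - n) → G.Cycle)
    (θ : Fin n → Real.Angle) : Fin (m + 1 - n) → ℝ :=
  fun i => (c i).winding θ

/-- Image of the winding map over the punctured torus. -/
def windingImage (G : OGraph n m) (c : Fin (m + 1 - n) → G.Cycle) :
    Set (Fin (m + 1 - n) → ℝ) :=
  {u | ∃ θ, G.Punctured θ ∧ G.windingMap c θ = u}

/-- The `u`-winding cell `Ω^G_u = w_Σ⁻¹(u)`. -/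
def windingCell (G : OGraph n m) (c : Fin (m + 1 - n) → G.Cycle)
    (u : Fin (m + 1 - n) → ℝ) : Set (Fin n → Real.Angle) :=
  {θ | G.Punctured θ ∧ G.windingMap c θ = u}

end OGraph

/-- `(f, θ)` is a solution of the flow network problem for `(G, {h_e}, p, γ)`. -/
def IsFlowSol {n m : ℕ} (G : OGraph n m) (a : Fin m → ℝ) (h : Fin m → ℝ → ℝ)
    (p : Fin n → ℝ) (γ : ℝ) (f : Fin m → ℝ) (θ : Fin n → Real.Angle) : Prop :=
  G.inc.mulVec f = p ∧ (∀ e, f e = a e * h e (G.edgeDiff θ e)) ∧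
    ∀ e, |G.edgeDiff θ e| ≤ γ

/-- A flow function: continuously differentiable, `2π`-periodic, odd. -/
def IsFlowFun (h : ℝ → ℝ) : Prop :=
  ContDiff ℝ 1 h ∧ Function.Periodic h (2 * π) ∧ ∀ x, h (-x) = -h x

/-- Monotone on a set: strictly increasing or strictly decreasing. -/
def StrictMonoOrAntiOn (h : ℝ → ℝ) (s : Set ℝ) : Prop :=
  StrictMonoOn h s ∨ StrictAntiOn h s

/-- `ψ` is obtained from `θ` by a rigid rotation `rot_s`, `s ∈ [-π, π)`. -/
def RotEquiv {n : ℕ} (θ ψ : Fin n → Real.Angle) : Prop :=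
  ∃ s ∈ Set.Ico (-π) π, ∀ i, ψ i = θ i + (s : Real.Angle)

/-- `N` is the Moore–Penrose pseudoinverse of `M`. -/
def IsMoorePenrose {k l : ℕ} (M : Matrix (Fin k) (Fin l) ℝ)
    (N : Matrix (Fin l) (Fin k) ℝ) : Prop :=
  M * N * M = M ∧ N * M * N = N ∧ (M * N)ᵀ = M * N ∧ (N * M)ᵀ = N * M

/-- `D`-weighted norm `‖v‖_D = ‖D^{1/2} v‖₂` for a positive diagonal weight `d`. -/
def wNorm {k : ℕ} (d v : Fin k → ℝ) : ℝ := Real.sqrt (∑ e, d e * v e ^ 2)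

/-- `∞`-norm of a matrix: maximum absolute row sum. -/
def matInfNorm {k l : ℕ} (M : Matrix (Fin k) (Fin l) ℝ) : ℝ := ⨆ i, ∑ j, |M i j|

/-- The extended flow function `h_γ` (one scalar component). -/
def extFlow (h : ℝ → ℝ) (γ : ℝ) : ℝ → ℝ := fun y =>
  if γ ≤ y then deriv h γ * (y - γ) + h γ
  else if y ≤ -γ then deriv h γ * (y + γ) + h (-γ)
  else h y

/-- The vector `h_γ^{-1}(𝒜^{-1} f)`. -/
def hGammaInv {m : ℕ} (h : Fin m → ℝ → ℝ) (γ : ℝ) (a f : Fin m → ℝ) : Fin m → ℝ :=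
  fun e => Function.invFun (extFlow (h e) γ) (f e / a e)

/-- `(L_min)_{ee} = min_{y ∈ [-γ,γ]} h_e'(y)`. -/
def lminOf {m : ℕ} (h : Fin m → ℝ → ℝ) (γ : ℝ) : Fin m → ℝ :=
  fun e => sInf (deriv (h e) '' Set.Icc (-γ) γ)

/-- `(L_max)_{ee} = max_{y ∈ [-γ,γ]} h_e'(y)`. -/
def lmaxOf {m : ℕ} (h : Fin m → ℝ → ℝ) (γ : ℝ) : Fin m → ℝ :=
  fun e => sSup (deriv (h e) '' Set.Icc (-γ) γ)

/-- The `D`-weighted cycle projection `𝒫_D = I - D𝒜Bᵀ(B D𝒜 Bᵀ)† B`, where `N`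
stands for the pseudoinverse `(B D𝒜 Bᵀ)†`. -/
def cycProj {n m : ℕ} (G : OGraph n m) (a d : Fin m → ℝ)
    (N : Matrix (Fin n) (Fin n) ℝ) : Matrix (Fin m) (Fin m) ℝ :=
  1 - Matrix.diagonal d * Matrix.diagonal a * G.incᵀ * N * G.inc

/-- The `u`-winding fixed-point map `T_u`. -/
def Tmap {n m : ℕ} (G : OGraph n m) (a : Fin m → ℝ) (h : Fin m → ℝ → ℝ) (γ : ℝ)
    (N : Matrix (Fin n) (Fin n) ℝ) (Cdag : Matrix (Fin m) (Fin (m + 1 - n)) ℝ)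
    (u : Fin (m + 1 - n) → ℝ) (f : Fin m → ℝ) : Fin m → ℝ :=
  f - (cycProj G a (lminOf h γ) N).mulVec
    ((Matrix.diagonal (lminOf h γ) * Matrix.diagonal a).mulVec
      (hGammaInv h γ a f - (2 * π) • Cdag.mulVec u))

/-- The `u`-winding balance equation. -/
def WindingBalance {n m : ℕ} (G : OGraph n m) (a : Fin m → ℝ) (h : Fin m → ℝ → ℝ)
    (p : Fin n → ℝ) (γ : ℝ) (N : Matrix (Fin n) (Fin n) ℝ)
    (Cdag : Matrix (Fin m) (Fin (m + 1 - n)) ℝ) (u : Fin (m + 1 - n) → ℝ)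
    (f : Fin m → ℝ) : Prop :=
  G.inc.mulVec f = p ∧
    (cycProj G a (lminOf h γ) N).mulVec
      ((Matrix.diagonal (lminOf h γ) * Matrix.diagonal a).mulVec
        (hGammaInv h γ a f - (2 * π) • Cdag.mulVec u)) = 0 ∧
    ∀ e, |f e| ≤ a e * |h e γ|



section Helpers

open Real Set

private lemma deriv_periodic' (H : ℝ → ℝ) (hper : Function.Periodic H (2*π)) :
    Function.Periodic (deriv H) (2*π) := by
  intro x
  have hfun : (fun y => H (y + 2*π)) = H := funext fun y => hper y
  rw [← deriv_comp_add_const, hfun]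

private lemma deriv_eq_of_angle_eq' (H : ℝ → ℝ) (hper : Function.Periodic H (2*π))
    {x y : ℝ} (hxy : ((x : ℝ) : Real.Angle) = ((y : ℝ) : Real.Angle)) :
    deriv H x = deriv H y := by
  obtain ⟨k, hk⟩ := Real.Angle.angle_eq_iff_two_pi_dvd_sub.mp hxy
  have hx : x = y + k * (2*π) := by linarith [hk]
  rw [hx]
  exact (deriv_periodic' H hper).int_mul k y

private lemma deriv_eq_flow' {γ : ℝ} (hγ : 0 ≤ γ) (h H : ℝ → ℝ)
    (hh : ContDiff ℝ 1 h) (hodd : ∀ x, h (-x) = -h x)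
    (hHdiff : Differentiable ℝ H) (hHdiff2 : Differentiable ℝ (deriv H))
    (hHeven : ∀ x, H (-x) = H x)
    (hHh : ∀ α ∈ Set.Ioo (-γ) γ, HasDerivAt H (h α) α)
    {y : ℝ} (hy : |y| ≤ γ) : deriv H y = h y := by
  rcases eq_or_lt_of_le hγ with hγ0 | hγpos
  · have hy0 : y = 0 := by
      rw [← hγ0] at hy
      exact abs_eq_zero.mp (le_antisymm hy (abs_nonneg y))
    subst hy0
    have h0 : h 0 = 0 := by have := hodd 0; simp at this; linarith
    have h1 : HasDerivAt (fun x => H (-x)) (-deriv H 0) 0 := by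
      have hd : HasDerivAt H (deriv H 0) (-(0:ℝ)) := by
        simpa using (hHdiff 0).hasDerivAt
      simpa [Function.comp_def] using hd.comp 0 (hasDerivAt_neg (0:ℝ))
    have h2 : HasDerivAt H (-deriv H 0) 0 := by
      have : (fun x => H (-x)) = H := funext hHeven
      rwa [this] at h1
    have h3 : deriv H 0 = -deriv H 0 := h2.deriv
    have : deriv H 0 = 0 := by linarith
    rw [this, h0]
  · have heq : Set.EqOn (deriv H) h (Set.Ioo (-γ) γ) := fun α hα => (hHh α hα).deriv
    have hcl : Set.EqOn (deriv H) h (closure (Set.Ioo (-γ) γ)) :=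
      heq.closure hHdiff2.continuous hh.continuous
    have hcc : closure (Set.Ioo (-γ) γ) = Set.Icc (-γ) γ := closure_Ioo (by linarith)
    rw [hcc] at hcl
    exact hcl (abs_le.mp hy)

private lemma edgeDiff_coe {n m : ℕ} (G : OGraph n m) (θ : Fin n → Real.Angle) (e : Fin m) :
    ((G.edgeDiff θ e : ℝ) : Real.Angle) = θ (G.tgt e) - θ (G.src e) := by
  unfold OGraph.edgeDiff dcc
  rw [Real.Angle.coe_neg, Real.Angle.coe_toReal, neg_sub]

private lemma core_hasDerivAt {n m : ℕ} (G : OGraph n m)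
    (a : Fin m → ℝ) (γ : ℝ) (hγ0 : 0 ≤ γ)
    (h : Fin m → ℝ → ℝ) (hflow : ∀ e, IsFlowFun (h e))
    (H : Fin m → ℝ → ℝ)
    (hHdiff : ∀ e, Differentiable ℝ (H e))
    (hHdiff2 : ∀ e, Differentiable ℝ (deriv (H e)))
    (hHper : ∀ e, Function.Periodic (H e) (2 * π))
    (hHeven : ∀ e x, H e (-x) = H e x)
    (hHh : ∀ e, ∀ α ∈ Set.Ioo (-γ) γ, HasDerivAt (H e) (h e α) α)
    (θ : Fin n → Real.Angle) (hbnd : ∀ e, |G.edgeDiff θ e| ≤ γ)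
    (x : Fin n → ℝ) (hx : ∀ i, ((x i : ℝ) : Real.Angle) = θ i) (i : Fin n) :
    HasDerivAt
      (fun t => ∑ e, a e *
        H e (Function.update x i t (G.tgt e) - Function.update x i t (G.src e)))
      (∑ e, G.inc i e * (a e * h e (G.edgeDiff θ e))) (x i) := by
  apply HasDerivAt.fun_sum
  intro e _
  have hde : deriv (H e) (x (G.tgt e) - x (G.src e)) = h e (G.edgeDiff θ e) := by
    have hangle : (((x (G.tgt e) - x (G.src e)) : ℝ) : Real.Angle)
        = ((G.edgeDiff θ e : ℝ) : Real.Angle) := by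
      rw [edgeDiff_coe, Real.Angle.coe_sub, hx, hx]
    rw [deriv_eq_of_angle_eq' (H e) (hHper e) hangle]
    exact deriv_eq_flow' hγ0 (h e) (H e) (hflow e).1 (hflow e).2.2
      (hHdiff e) (hHdiff2 e) (hHeven e) (hHh e) (hbnd e)
  by_cases hti : G.tgt e = i
  · have hsi : G.src e ≠ i := fun hc => G.noLoop e (hc.trans hti.symm)
    have hfun : (fun t => a e *
        H e (Function.update x i t (G.tgt e) - Function.update x i t (G.src e)))
        = fun t => a e * H e (t - x (G.src e)) := by
      funext t
      rw [hti, Function.update_self, Function.update_of_ne hsi]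
    rw [hfun]
    have hinner : HasDerivAt (fun t : ℝ => t - x (G.src e)) 1 (x i) := by
      simpa using (hasDerivAt_id (x i)).sub_const (x (G.src e))
    have houter : HasDerivAt (H e) (deriv (H e) (x (G.tgt e) - x (G.src e)))
        (x i - x (G.src e)) := by
      rw [hti]; exact (hHdiff e _).hasDerivAt
    have := (houter.comp (x i) hinner).const_mul (a e)
    have hval : G.inc i e * (a e * h e (G.edgeDiff θ e))
        = a e * (deriv (H e) (x (G.tgt e) - x (G.src e)) * 1) := by
      rw [hde]
      have : G.inc i e = 1 := by
        simp only [OGraph.inc, Matrix.of_apply, if_pos hti.symm]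
      rw [this]; ring
    rw [hval]
    exact this
  · by_cases hsi : G.src e = i
    · have hfun : (fun t => a e *
          H e (Function.update x i t (G.tgt e) - Function.update x i t (G.src e)))
          = fun t => a e * H e (x (G.tgt e) - t) := by
        funext t
        rw [hsi, Function.update_self, Function.update_of_ne hti]
      rw [hfun]
      have hinner : HasDerivAt (fun t : ℝ => x (G.tgt e) - t) (-1) (x i) := by
        simpa using (hasDerivAt_id (x i)).const_sub (x (G.tgt e))
      have houter : HasDerivAt (H e) (deriv (H e) (x (G.tgt e) - x (G.src e)))
          (x (G.tgt e) - x i) := by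
        rw [hsi]; exact (hHdiff e _).hasDerivAt
      have := (houter.comp (x i) hinner).const_mul (a e)
      have hval : G.inc i e * (a e * h e (G.edgeDiff θ e))
          = a e * (deriv (H e) (x (G.tgt e) - x (G.src e)) * (-1)) := by
        rw [hde]
        have hne : i ≠ G.tgt e := fun hc => hti hc.symm
        have : G.inc i e = -1 := by
          simp only [OGraph.inc, Matrix.of_apply, if_neg hne, if_pos hsi.symm]
        rw [this]; ring
      rw [hval]
      exact this
    · have hfun : (fun t => a e *
          H e (Function.update x i t (G.tgt e) - Function.update x i t (G.src e)))
          = fun _ => a e * H e (x (G.tgt e) - x (G.src e)) := by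
        funext t
        rw [Function.update_of_ne hti, Function.update_of_ne hsi]
      rw [hfun]
      have hval : G.inc i e * (a e * h e (G.edgeDiff θ e)) = 0 := by
        have h1 : i ≠ G.tgt e := fun hc => hti hc.symm
        have h2 : i ≠ G.src e := fun hc => hsi hc.symm
        have : G.inc i e = 0 := by
          simp only [OGraph.inc, Matrix.of_apply, if_neg h1, if_neg h2]
        rw [this]; ring
      rw [hval]
      exact hasDerivAt_const _ _

end Helpers

/-- Equivalence of flow and elastic network problems on the n-torus. -/
theorem flow_elastic_equivalence {n m : ℕ} (G : OGraph n m)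
    (a : Fin m → ℝ) (ha : ∀ e, 0 < a e)
    (q : Fin n → ℝ) (hq : ∑ i, q i = 0)
    (γ : ℝ) (hγ : γ ∈ Set.Ico 0 π)
    (h : Fin m → ℝ → ℝ) (hflow : ∀ e, IsFlowFun (h e))
    (H : Fin m → ℝ → ℝ)
    (hHdiff : ∀ e, Differentiable ℝ (H e))
    (hHdiff2 : ∀ e, Differentiable ℝ (deriv (H e)))
    (hHper : ∀ e, Function.Periodic (H e) (2 * π))
    (hHeven : ∀ e x, H e (-x) = H e x)
    (hHh : ∀ e, ∀ α ∈ Set.Ioo (-γ) γ, HasDerivAt (H e) (h e α) α)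
    (θ : Fin n → Real.Angle) :
    (∃ f : Fin m → ℝ, IsFlowSol G a h q γ f θ) ↔
      ((∀ e, |G.edgeDiff θ e| ≤ γ) ∧
        ∀ x : Fin n → ℝ, (∀ i, ((x i : ℝ) : Real.Angle) = θ i) →
          ∀ i : Fin n,
            HasDerivAt
              (fun t => ∑ e, a e *
                H e (Function.update x i t (G.tgt e) - Function.update x i t (G.src e)))
              (q i) (x i)) := by
  have hγ0 : 0 ≤ γ := hγ.1
  constructor
  · rintro ⟨f, hBf, hf, hbnd⟩
    refine ⟨hbnd, fun x hx i => ?_⟩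
    have hcore := core_hasDerivAt G a γ hγ0 h hflow H hHdiff hHdiff2 hHper hHeven hHh
      θ hbnd x hx i
    have hval : (∑ e, G.inc i e * (a e * h e (G.edgeDiff θ e))) = q i := by
      rw [← hBf]
      simp only [Matrix.mulVec, dotProduct]
      exact Finset.sum_congr rfl fun e _ => by rw [hf e]
    rwa [hval] at hcore
  · rintro ⟨hbnd, hgrad⟩
    refine ⟨fun e => a e * h e (G.edgeDiff θ e), ?_, fun e => rfl, hbnd⟩
    funext i
    set x : Fin n → ℝ := fun j => (θ j).toReal with hxdef
    have hx : ∀ j, ((x j : ℝ) : Real.Angle) = θ j := fun j => Real.Angle.coe_toReal _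
    have hcore := core_hasDerivAt G a γ hγ0 h hflow H hHdiff hHdiff2 hHper hHeven hHh
      θ hbnd x hx i
    have hgi := hgrad x hx i
    have := hcore.unique hgi
    rw [← this]
    simp [Matrix.mulVec, dotProduct]


end
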